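/- For each elementary inequality (i,j|K) with distinct i,j ∈ X and K ⊆ X∖{i,j}, there exists a function g : 2^X → ℝ that satisfies every elementary submodular inequality except (i,j|K). Concretely, with k = |K|, the function g defined by g(iK) = g(jK) = k and g(A) = min{|A|, k+1} for all other subsets A satisfies g(i'K') + g(j'K') − g(K') − g(i'j'K') ≥ 0 for all elementary triplets (i',j'|K') ≠ (i,j|K), while g(iK)+g(jK)−g(K)−g(ijK) = −1. -/
import Mathlib


open Finset

variable {α : Type*} [Fintype α] [DecidableEq α]

lemma excl_aux {i j i' j' : α} {K K' : Finset α} (hij : i ≠ j) (hij' : i' ≠ j')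
    (hi' : i' ∉ K') (hj' : j' ∉ K') (hiK : i ∉ K) (hjK : j ∉ K)
    (hA : insert i' K' = insert i K ∨ insert i' K' = insert j K)
    (hB : insert j' K' = insert i K ∨ insert j' K' = insert j K) :
    ({i', j'} : Finset α) = {i, j} ∧ K' = K := by
  have hne : insert i' K' ≠ insert j' K' := by
    intro h
    have : i' ∈ insert j' K' := h ▸ mem_insert_self i' K'
    simp [hij', hi'] at this
  have hKK : K' = K := by
    ext x
    constructor
    · intro hx
      have h1 : x ∈ insert i K ∧ x ∈ insert j K := by
        rcases hA with h|h <;> rcases hB with h'|h'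
        · exact absurd (h.trans h'.symm) hne
        · exact ⟨h ▸ mem_insert_of_mem hx, h' ▸ mem_insert_of_mem hx⟩
        · exact ⟨h' ▸ mem_insert_of_mem hx, h ▸ mem_insert_of_mem hx⟩
        · exact absurd (h.trans h'.symm) hne
      rcases mem_insert.1 h1.1 with rfl|hx1
      · rcases mem_insert.1 h1.2 with rfl|hx2
        · exact absurd rfl hij
        · exact hx2
      · exact hx1
    · intro hx
      have h1 : x ∈ insert i' K' ∧ x ∈ insert j' K' := by
        rcases hA with h|h <;> rcases hB with h'|h'
        · exact absurd (h.trans h'.symm) hne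
        · exact ⟨h ▸ mem_insert_of_mem hx, h' ▸ mem_insert_of_mem hx⟩
        · exact ⟨h ▸ mem_insert_of_mem hx, h' ▸ mem_insert_of_mem hx⟩
        · exact absurd (h.trans h'.symm) hne
      rcases mem_insert.1 h1.1 with rfl|hx1
      · rcases mem_insert.1 h1.2 with rfl|hx2
        · exact absurd rfl hij'
        · exact hx2
      · exact hx1
  subst hKK
  refine ⟨?_, rfl⟩
  have mi' : i' = i ∨ i' = j := by
    rcases hA with h|h
    · left; have := h ▸ mem_insert_self i' K'; simpa [hi'] using this
    · right; have := h ▸ mem_insert_self i' K'; simpa [hi'] using this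
  have mj' : j' = i ∨ j' = j := by
    rcases hB with h|h
    · left; have := h ▸ mem_insert_self j' K'; simpa [hj'] using this
    · right; have := h ▸ mem_insert_self j' K'; simpa [hj'] using this
  rcases mi' with rfl|rfl <;> rcases mj' with rfl|rfl
  · exact absurd rfl hij'
  · rfl
  · exact pair_comm _ _
  · exact absurd rfl hij'

lemma arith4_cast (x1 x2 x3 x4 : ℕ) (h : x3 + x4 ≤ x1 + x2) :
    (0:ℝ) ≤ (x1:ℝ) + (x2:ℝ) - (x3:ℝ) - (x4:ℝ) := by
  have := (Nat.cast_le (α := ℝ)).mpr h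
  push_cast at this
  linarith


/-- For each elementary inequality `(i,j|K)` there is a function `g`, concretely
`g(iK)=g(jK)=|K|` and `g(A)=min{|A|,|K|+1}` otherwise, which satisfies every
elementary submodular inequality except `(i,j|K)`, where it evaluates to `-1`. -/
theorem exists_witness_for_elementary (i j : α) (K : Finset α)
    (hij : i ≠ j) (hiK : i ∉ K) (hjK : j ∉ K) :
    ∃ g : Finset α → ℝ,
      (g = fun A => if A = insert i K ∨ A = insert j K then (K.card : ℝ)
                    else min (A.card : ℝ) ((K.card : ℝ) + 1)) ∧
      (∀ i' j' : α, ∀ K' : Finset α, i' ≠ j' → i' ∉ K' → j' ∉ K' →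
        ¬(({i', j'} : Finset α) = {i, j} ∧ K' = K) →
        0 ≤ g (insert i' K') + g (insert j' K') - g K'
              - g (insert i' (insert j' K'))) ∧
      g (insert i K) + g (insert j K) - g K - g (insert i (insert j K)) = -1 := by
  have hciK : (insert i K).card = K.card + 1 := card_insert_of_notMem hiK
  have hcjK : (insert j K).card = K.card + 1 := card_insert_of_notMem hjK
  have cmin : ∀ a : ℕ, min ((a:ℝ)) ((K.card:ℝ)+1) = ((min a (K.card+1) : ℕ) : ℝ) := by
    intro a; push_cast; ring_nf
  refine ⟨_, rfl, ?_, ?_⟩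
  · intro i' j' K' hij' hi' hj' hne
    have hc1 : (insert i' K').card = K'.card + 1 := card_insert_of_notMem hi'
    have hm : i' ∉ insert j' K' := by simp [hij', hi']
    have hc2 : (insert j' K').card = K'.card + 1 := card_insert_of_notMem hj'
    have hc3 : (insert i' (insert j' K')).card = K'.card + 2 := by
      rw [card_insert_of_notMem hm, hc2]
    split_ifs with h1 h2 h3 h4 h5 h6 h7 h8 h9 h10 h11 h12 h13 h14 h15
    all_goals try (rename insert i' K' = insert i K ∨ insert i' K' = insert j K => hA)
    all_goals try (rename insert j' K' = insert i K ∨ insert j' K' = insert j K => hB)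
    all_goals try (rename K' = insert i K ∨ K' = insert j K => hC)
    all_goals try (rename insert i' (insert j' K') = insert i K ∨ insert i' (insert j' K') = insert j K => hD)
    all_goals try (exact absurd (excl_aux hij hij' hi' hj' hiK hjK hA hB) hne)
    all_goals
      try (rcases hA with h|h <;>
            (have eA : K'.card = K.card := by have := congrArg Finset.card h; omega) <;>
            clear h)
    all_goals
      try (rcases hB with h|h <;>
            (have eB : K'.card = K.card := by have := congrArg Finset.card h; omega) <;>
            clear h)
    all_goals
      try (rcases hC with h|h <;>
            (have eC : K'.card = K.card + 1 := by have := congrArg Finset.card h; omega) <;>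
            clear h)
    all_goals
      try (rcases hD with h|h <;>
            (have eD : K'.card + 2 = K.card + 1 := by
              have := congrArg Finset.card h; omega) <;>
            clear h)
    all_goals simp only [hc1, hc2, hc3, cmin]
    all_goals exact arith4_cast _ _ _ _ (by omega)
  · have hKne : ¬(K = insert i K ∨ K = insert j K) := by
      rintro (h|h) <;> (have := congrArg Finset.card h; omega)
    have hjmem : j ∉ insert j K → False := by simp
    have hcij : (insert i (insert j K)).card = K.card + 2 := by
      rw [card_insert_of_notMem (by simp [hij, hiK]), hcjK]
    have hijne : ¬(insert i (insert j K) = insert i K ∨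
        insert i (insert j K) = insert j K) := by
      rintro (h|h) <;> (have := congrArg Finset.card h; omega)
    rw [if_pos (Or.inl rfl : insert i K = insert i K ∨ insert i K = insert j K),
      if_pos (Or.inr rfl : insert j K = insert i K ∨ insert j K = insert j K),
      if_neg hKne, if_neg hijne, hcij, cmin, cmin]
    have e1 : min K.card (K.card + 1) = K.card := by omega
    have e2 : min (K.card + 2) (K.card + 1) = K.card + 1 := by omega
    rw [e1, e2]
    push_cast
    ring
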